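/- Let P be a large-tree forcing notion, ⟨T,T'⟩ ∈ P×_{E0}P, n < ω, and s, t ∈ 2^n. Then ⟨T→s, T'→t⟩ ∈ P×_{E0}P. -/

import Mathlib

namespace E0L

/-- Finite binary strings `2^{<ω}`. -/
abbrev Str : Type := List Bool

/-- Sets of binary strings (in particular, trees). -/
abbrev Tr : Type := Set Str

/-- The action `s·t` of a string on a string:
`(s·t)(k) = t(k) + s(k) mod 2` for `k < min(|s|,|t|)` and `(s·t)(k) = t(k)` otherwise. -/
def act (s t : Str) : Str := List.ofFn fun k : Fin t.length => Bool.xor (s.getD k false) (t.get k)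

/-- The action `s·T` of a string on a set of strings. -/
def actT (s : Str) (T : Tr) : Tr := (act s) '' T

/-- `T ↾ s = {t ∈ T : s ⊆ t or t ⊆ s}`. -/
def restr (T : Tr) (s : Str) : Tr := {t ∈ T | s <+: t ∨ t <+: s}

/-- `[T]`, the set of infinite branches of `T` (as elements of Cantor space `2^ω`). -/
def branches (T : Tr) : Set (ℕ → Bool) := {x | ∀ n : ℕ, (List.ofFn fun k : Fin n => x k) ∈ T}

/-- `T[s] = {t : s ⊆ t or t ⊂ s}`. -/
def Tbr (s : Str) : Tr := {t | s <+: t ∨ (t <+: s ∧ t ≠ s)}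

/-- `LTwit T r q` : the strings `q i n` witness that `T` is an E0-large tree with stem `r`:
`|q^0_n| = |q^1_n| ≥ 1`, `q^i_n(0) = i`, and `T` consists of all initial segments of strings
of the form `r⌢q^{i(0)}_0⌢…⌢q^{i(n)}_n`. -/
def LTwit (T : Tr) (r : Str) (q : ℕ → Bool → Str) : Prop :=
  (∀ n : ℕ, (q n true).length = (q n false).length ∧ 1 ≤ (q n false).length) ∧
  (∀ n : ℕ, ∀ i : Bool, (q n i).head? = some i) ∧
  T = {t | ∃ n : ℕ, ∃ f : ℕ → Bool,
        t <+: r ++ ((List.range (n+1)).map (fun k => q k (f k))).flatten}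

/-- `T` is an E0-large tree (`T ∈ LT`). -/
def IsLT (T : Tr) : Prop := ∃ r q, LTwit T r q

/-- `stem T` : the longest `s ∈ T` with `T = T↾s`. -/
noncomputable def stem (T : Tr) : Str :=
  Classical.epsilon fun s => s ∈ T ∧ restr T s = T ∧ ∀ t ∈ T, restr T t = T → t.length ≤ s.length

/-- The canonical witness `(r, q)` of an E0-large tree. -/
noncomputable def witness (T : Tr) : Str × (ℕ → Bool → Str) :=
  Classical.epsilon fun rq => LTwit T rq.1 rq.2

/-- Splitting levels computed from a witness: `spl_0 = |r|`, `spl_{n+1} = spl_n + |q^i_n|`. -/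
def splN (r : Str) (q : ℕ → Bool → Str) : ℕ → ℕ
  | 0 => r.length
  | n+1 => splN r q n + (q n false).length

/-- `spl T n`, the `n`-th splitting level of an E0-large tree `T`. -/
noncomputable def spl (T : Tr) (n : ℕ) : ℕ := splN (witness T).1 (witness T).2 n

/-- Simple splitting `T→i = T↾(stem(T)⌢i)`. -/
noncomputable def split1 (T : Tr) (i : Bool) : Tr := restr T (stem T ++ [i])

/-- Iterated splitting `T→s`: `T→Λ = T`, `T→(s⌢i) = (T→s)→i`. -/
noncomputable def splitS (T : Tr) (s : Str) : Tr := s.foldl split1 T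

/-- `S ⊆_n T` : `S ⊆ T` and `spl_k(S) = spl_k(T)` for all `k < n`. -/
def subN (n : ℕ) (S T : Tr) : Prop := S ⊆ T ∧ ∀ k < n, spl S k = spl T k

/-- A large-tree forcing notion: a set of E0-large trees closed under restriction
and under the action of strings. -/
def IsLTF (P : Set Tr) : Prop :=
  (∀ T ∈ P, IsLT T) ∧
  (∀ T ∈ P, ∀ u ∈ T, restr T u ∈ P) ∧
  (∀ T ∈ P, ∀ s : Str, actT s T ∈ P)

/-- `T` is an `n`-collage over `P`: `T ∈ LT` and `T→s ∈ P` for all `s ∈ 2^n`. -/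
def IsCollage (P : Set Tr) (n : ℕ) (T : Tr) : Prop :=
  IsLT T ∧ ∀ s : Str, s.length = n → splitS T s ∈ P

/-- `D` is open dense in `P` (as a set of trees). -/
def OpenDense1 (P D : Set Tr) : Prop :=
  D ⊆ P ∧ (∀ S ∈ P, ∃ T ∈ D, T ⊆ S) ∧ (∀ S ∈ P, ∀ T ∈ D, S ⊆ T → S ∈ D)

/-- `⟨T,T'⟩` is a condition of the conditional product `P ×_{E0} P`. -/
def CondPair (P : Set Tr) (p : Tr × Tr) : Prop :=
  p.1 ∈ P ∧ p.2 ∈ P ∧ ∃ s : Str, actT s p.1 = p.2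

/-- Componentwise order on pairs of trees: `p ≤ q`. -/
def pleq (p q : Tr × Tr) : Prop := p.1 ⊆ q.1 ∧ p.2 ⊆ q.2

/-- Compatibility of two conditions in `P ×_{E0} P`. -/
def Compat (P : Set Tr) (p q : Tr × Tr) : Prop :=
  ∃ r : Tr × Tr, CondPair P r ∧ pleq r p ∧ pleq r q

/-- `D` is pre-dense in `P ×_{E0} P`. -/
def PreDense2 (P : Set Tr) (D : Set (Tr × Tr)) : Prop :=
  ∀ p : Tr × Tr, CondPair P p → ∃ q ∈ D, Compat P p q

/-- `D` is open dense in `P ×_{E0} P`. -/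
def OpenDense2 (P : Set Tr) (D : Set (Tr × Tr)) : Prop :=
  D ⊆ {p | CondPair P p} ∧
  (∀ p : Tr × Tr, CondPair P p → ∃ q ∈ D, pleq q p) ∧
  (∀ p : Tr × Tr, CondPair P p → ∀ q ∈ D, pleq p q → p ∈ D)

/-- A `P ×_{E0} P`-real name `c = ⟨C_n^i⟩`. -/
def IsRealName (P : Set Tr) (c : ℕ → Bool → Set (Tr × Tr)) : Prop :=
  (∀ n : ℕ, ∀ i : Bool, c n i ⊆ {p | CondPair P p}) ∧
  (∀ n : ℕ, PreDense2 P (c n false ∪ c n true)) ∧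
  (∀ n : ℕ, ∀ p ∈ c n false, ∀ q ∈ c n true, ¬ Compat P p q)

/-- `p` directly forces `c(n) = i`. -/
def DFVal (c : ℕ → Bool → Set (Tr × Tr)) (p : Tr × Tr) (n : ℕ) (i : Bool) : Prop :=
  ∃ q ∈ c n i, pleq p q

/-- `p` directly forces `s ⊂ c`. -/
def DFPrefix (c : ℕ → Bool → Set (Tr × Tr)) (p : Tr × Tr) (s : Str) : Prop :=
  ∀ n < s.length, DFVal c p n (s.getD n false)

/-- `p` directly forces `c ∉ [U]`. -/
def DFAvoid (c : ℕ → Bool → Set (Tr × Tr)) (p : Tr × Tr) (U : Tr) : Prop :=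
  ∃ s : Str, s ∉ U ∧ DFPrefix c p s

/-- `p` directly forces `c ≠ d`: there are incomparable strings `s, t` such that
`p` directly forces `s ⊂ c` and `t ⊂ d`. -/
def DFNe (c d : ℕ → Bool → Set (Tr × Tr)) (p : Tr × Tr) : Prop :=
  ∃ s t : Str, ¬ s <+: t ∧ ¬ t <+: s ∧ DFPrefix c p s ∧ DFPrefix d p t

/-- The action `σ·c` of a string on a real name. -/
def actName (σ : Str) (c : ℕ → Bool → Set (Tr × Tr)) : ℕ → Bool → Set (Tr × Tr) :=
  fun n i => if σ.getD n false = true then c n (!i) else c n i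

/-- The name `π_left` of the left generic real. -/
def piLeft : ℕ → Bool → Set (Tr × Tr) := fun n i =>
  {p | ∃ s t : Str, s.length = n+1 ∧ t.length = n+1 ∧ s.getD n false = i ∧ p = (Tbr s, Tbr t)}

/-- The name `π_right` of the right generic real. -/
def piRight : ℕ → Bool → Set (Tr × Tr) := fun n i =>
  {p | ∃ s t : Str, s.length = n+1 ∧ t.length = n+1 ∧ t.getD n false = i ∧ p = (Tbr s, Tbr t)}


/-! ### Auxiliary lemmas -/

theorem act_length (σ t : Str) : (act σ t).length = t.length := by simp [act]

theorem act_getElem (σ t : Str) (k : ℕ) (h : k < t.length) :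
    (act σ t)[k]'(by simpa [act_length]) = Bool.xor (σ.getD k false) (t[k]) := by
  simp [act]

theorem act_congr {σ σ' : Str} (t : Str) (h : ∀ k < t.length, σ.getD k false = σ'.getD k false) :
    act σ t = act σ' t := by
  apply List.ext_getElem (by simp [act_length])
  intro k h1 h2
  rw [act_getElem σ t k (by simpa [act_length] using h1),
      act_getElem σ' t k (by simpa [act_length] using h1),
      h k (by simpa [act_length] using h1)]

theorem act_eq_self (σ t : Str) (h : ∀ k < t.length, σ.getD k false = false) : act σ t = t := by
  apply List.ext_getElem (act_length σ t)
  intro k h1 h2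
  rw [act_getElem σ t k h2, h k h2]
  simp

/-- Pointwise xor of two strings. -/
def sxor (u v : Str) : Str :=
  List.ofFn fun k : Fin (max u.length v.length) => Bool.xor (u.getD k false) (v.getD k false)

theorem sxor_getD (u v : Str) (k : ℕ) :
    (sxor u v).getD k false = Bool.xor (u.getD k false) (v.getD k false) := by
  rcases lt_or_ge k (max u.length v.length) with h | h
  · rw [List.getD_eq_getElem _ _ (by simp [sxor]; omega)]
    simp [sxor]
  · rw [List.getD_eq_default _ _ (by simp [sxor]; omega),
      List.getD_eq_default _ _ (le_trans (le_max_left _ _) h),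
      List.getD_eq_default _ _ (le_trans (le_max_right _ _) h)]
    rfl

theorem act_act (σ σ' t : Str) : act σ (act σ' t) = act (sxor σ σ') t := by
  apply List.ext_getElem (by simp [act_length])
  intro k h1 h2
  have hk : k < t.length := by simpa [act_length] using h1
  rw [act_getElem σ _ k (by simpa [act_length]), act_getElem σ' t k hk,
      act_getElem _ t k hk, sxor_getD]
  cases σ.getD k false <;> cases σ'.getD k false <;> simp

theorem act_act_self (σ t : Str) : act σ (act σ t) = t := by
  rw [act_act]
  exact act_eq_self _ _ (fun k _ => by rw [sxor_getD]; simp)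

theorem getD_drop (l : Str) (m n : ℕ) : (l.drop m).getD n false = l.getD (m+n) false := by
  simp [List.getD_eq_getElem?_getD, List.getElem?_drop]

theorem act_append (σ u v : Str) : act σ (u ++ v) = act σ u ++ act (σ.drop u.length) v := by
  apply List.ext_getElem (by simp [act_length])
  intro k h1 h2
  have hk : k < u.length + v.length := by simpa [act_length] using h1
  rw [act_getElem _ _ k (by simpa), List.getElem_append (i := k) (by simpa using hk),
      List.getElem_append (i := k) (by simpa [act_length] using hk)]
  simp only [act_length]
  split_ifs with h
  · rw [act_getElem _ _ k h]
  · rw [act_getElem _ _ _ (by omega), getD_drop]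
    congr 2
    omega

theorem act_singleton (σ : Str) (a : Bool) : act σ [a] = [Bool.xor (σ.getD 0 false) a] := by
  simp [act, List.ofFn_succ]

theorem act_prefix {u v : Str} (σ : Str) (h : u <+: v) : act σ u <+: act σ v := by
  obtain ⟨w, rfl⟩ := h
  rw [act_append]
  exact List.prefix_append _ _

theorem act_prefix_iff {u v : Str} (σ : Str) : act σ u <+: act σ v ↔ u <+: v := by
  constructor
  · intro h
    have := act_prefix σ h
    rwa [act_act_self, act_act_self] at this
  · exact act_prefix σ

theorem act_inj (σ : Str) : Function.Injective (act σ) := by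
  intro u v h
  have := congrArg (act σ) h
  rwa [act_act_self, act_act_self] at this

theorem actT_restr (σ : Str) (T : Tr) (u : Str) :
    actT σ (restr T u) = restr (actT σ T) (act σ u) := by
  ext x
  constructor
  · rintro ⟨y, ⟨hy, hc⟩, rfl⟩
    refine ⟨⟨y, hy, rfl⟩, ?_⟩
    rcases hc with h | h
    · exact Or.inl (act_prefix σ h)
    · exact Or.inr (act_prefix σ h)
  · rintro ⟨⟨y, hy, rfl⟩, hc⟩
    refine ⟨y, ⟨hy, ?_⟩, rfl⟩
    rcases hc with h | h
    · exact Or.inl ((act_prefix_iff σ).1 h)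
    · exact Or.inr ((act_prefix_iff σ).1 h)

theorem actT_actT (σ σ' : Str) (T : Tr) : actT σ (actT σ' T) = actT (sxor σ σ') T := by
  unfold actT
  rw [← Set.image_comp]
  exact Set.image_congr (fun x _ => act_act σ σ' x)

theorem actT_inj (σ : Str) {S T : Tr} (h : actT σ S = actT σ T) : S = T :=
  Set.image_injective.2 (act_inj σ) h

theorem flatten_range_succ (g : ℕ → Str) (n : ℕ) :
    ((List.range (n+1)).map g).flatten = g 0 ++ ((List.range n).map (g ∘ Nat.succ)).flatten := by
  rw [List.range_succ_eq_map]
  simp [Function.comp]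

theorem q_cons {T r q} (hw : LTwit T r q) (n : ℕ) (i : Bool) :
    ∃ l : Str, q n i = i :: l := by
  have h := hw.2.1 n i
  cases hq : q n i with
  | nil => rw [hq] at h; simp at h
  | cons b l => rw [hq] at h; simp at h; exact ⟨l, by rw [h]⟩

theorem q_getD0 {T r q} (hw : LTwit T r q) (n : ℕ) (i : Bool) : (q n i).getD 0 false = i := by
  obtain ⟨l, hl⟩ := q_cons hw n i
  simp [hl]

theorem q_length {T r q} (hw : LTwit T r q) (n : ℕ) (i : Bool) :
    (q n i).length = (q n false).length := by
  cases i
  · rfl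
  · exact (hw.1 n).1

theorem mem_wit {T r q} (hw : LTwit T r q) (t : Str) :
    t ∈ T ↔ ∃ n : ℕ, ∃ f : ℕ → Bool,
      t <+: r ++ ((List.range (n+1)).map (fun k => q k (f k))).flatten := by
  conv_lhs => rw [hw.2.2]
  rfl

theorem stem_mem {T r q} (hw : LTwit T r q) : r ∈ T := by
  rw [mem_wit hw]
  exact ⟨0, fun _ => false, List.prefix_append _ _⟩

theorem stem_cons_mem {T r q} (hw : LTwit T r q) (i : Bool) : r ++ [i] ∈ T := by
  rw [mem_wit hw]
  refine ⟨0, fun _ => i, ?_⟩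
  obtain ⟨l, hl⟩ := q_cons hw 0 i
  simp [hl, List.range_succ]

theorem restr_stem {T r q} (hw : LTwit T r q) : restr T r = T := by
  ext t
  constructor
  · exact fun h => h.1
  · intro ht
    refine ⟨ht, ?_⟩
    rw [mem_wit hw] at ht
    obtain ⟨n, f, hp⟩ := ht
    exact List.prefix_or_prefix_of_prefix (List.prefix_append _ _) hp

theorem len_le_stem {T r q} (hw : LTwit T r q) {x : Str} (hx : x ∈ T) (hrx : restr T x = T) :
    x.length ≤ r.length := by
  by_contra hlen
  push_neg at hlen
  rw [mem_wit hw] at hx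
  obtain ⟨n, f, hp⟩ := hx
  rw [flatten_range_succ, ← List.append_assoc] at hp
  obtain ⟨l, hl⟩ := q_cons hw 0 (f 0)
  have hxr : x[r.length]'hlen = f 0 := by
    have h1 : (r ++ q 0 (f 0))[r.length]'(by simp [hl]) = f 0 := by
      rw [List.getElem_append_right (le_refl _)]
      simp [hl]
    have h2 := hp.getElem (i := r.length) hlen
    rw [h2, List.getElem_append_left (by simp [hl] : r.length < (r ++ q 0 (f 0)).length)]
    exact h1
  have hy : r ++ [!(f 0)] ∈ T := stem_cons_mem hw _
  rw [← hrx] at hy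
  have hcomp := hy.2
  have hylen : (r ++ [!(f 0)]).length = r.length + 1 := by simp
  have hyx : r ++ [!(f 0)] <+: x := by
    rcases hcomp with h | h
    · have : x = r ++ [!(f 0)] := h.eq_of_length_le (by rw [hylen]; omega)
      rw [this]
    · exact h
  have : x[r.length]'hlen = !(f 0) := by
    have := hyx.getElem (i := r.length) (by rw [hylen]; omega)
    rw [← this, List.getElem_append_right (le_refl _)]
    simp
  rw [hxr] at this
  exact Bool.not_ne_self (f 0) this.symm

/-- The defining property of the stem. -/
def stemSpec (T : Tr) (s : Str) : Prop :=
  s ∈ T ∧ restr T s = T ∧ ∀ t ∈ T, restr T t = T → t.length ≤ s.length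

theorem stemSpec_of_wit {T r q} (hw : LTwit T r q) : stemSpec T r :=
  ⟨stem_mem hw, restr_stem hw, fun _ ht hrt => len_le_stem hw ht hrt⟩

theorem stemSpec_unique {T r q} (hw : LTwit T r q) {x : Str} (hx : stemSpec T x) : x = r := by
  have h1 : x.length ≤ r.length := len_le_stem hw hx.1 hx.2.1
  have h2 : r.length ≤ x.length := hx.2.2 r (stem_mem hw) (restr_stem hw)
  have hcomp : r <+: x ∨ x <+: r := by
    have := hx.1
    rw [← restr_stem hw] at this
    exact this.2
  rcases hcomp with h | h
  · exact (h.eq_of_length_le h1).symm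
  · exact h.eq_of_length_le h2

theorem stem_eq {T r q} (hw : LTwit T r q) : stem T = r := by
  have h := Classical.epsilon_spec (p := fun s => s ∈ T ∧ restr T s = T ∧
    ∀ t ∈ T, restr T t = T → t.length ≤ s.length) ⟨r, stemSpec_of_wit hw⟩
  exact stemSpec_unique hw h

theorem stemSpec_act (σ : Str) {T : Tr} {x : Str} (hx : stemSpec T x) :
    stemSpec (actT σ T) (act σ x) := by
  obtain ⟨hmem, hres, hmax⟩ := hx
  refine ⟨⟨x, hmem, rfl⟩, ?_, ?_⟩
  · rw [← actT_restr, hres]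
  · rintro t ⟨y, hy, rfl⟩ hrt
    rw [← actT_restr] at hrt
    have : restr T y = T := actT_inj σ hrt
    have := hmax y hy this
    rw [act_length, act_length]
    exact this
theorem sxor_length {u v : Str} (h : u.length = v.length) : (sxor u v).length = v.length := by
  simp [sxor, h]

theorem act_sxor_left {u v : Str} (h : u.length = v.length) : act (sxor u v) u = v := by
  apply List.ext_getElem (by rw [act_length, h])
  intro k h1 h2
  have hk : k < u.length := by simpa [act_length] using h1
  rw [act_getElem _ _ k hk, sxor_getD, List.getD_eq_getElem _ _ hk,
    List.getD_eq_getElem _ _ h2]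
  cases u[k] <;> simp

theorem act_sxor_right {u v : Str} (h : u.length = v.length) : act (sxor u v) v = u := by
  apply List.ext_getElem (by rw [act_length, h])
  intro k h1 h2
  have hk : k < v.length := by simpa [act_length] using h1
  rw [act_getElem _ _ k hk, sxor_getD, List.getD_eq_getElem _ _ hk,
    List.getD_eq_getElem _ _ h2]
  cases v[k] <;> cases u[k]'h2 <;> simp

theorem getD_replicate (m k : ℕ) : (List.replicate m false).getD k false = false := by
  rcases lt_or_ge k m with h | h
  · rw [List.getD_eq_getElem _ _ (by simpa)]; simp
  · rw [List.getD_eq_default _ _ (by simpa)]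

theorem getD_append_left (u v : Str) (k : ℕ) (h : k < u.length) :
    (u ++ v).getD k false = u.getD k false := by
  rw [List.getD_eq_getElem _ _ (by simp; omega), List.getD_eq_getElem _ _ h,
    List.getElem_append_left h]

/-- The flip string: acts trivially on the first `|r|` coordinates and (if `c`)
flips the first `q`-block. -/
def flipStr (r : Str) (q : ℕ → Bool → Str) (c : Bool) : Str :=
  List.replicate r.length false ++
    (cond c (sxor (q 0 true) (q 0 false)) (List.replicate (q 0 false).length false))

theorem flipStr_getD_lt (r : Str) (q : ℕ → Bool → Str) (c : Bool) {k : ℕ} (h : k < r.length) :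
    (flipStr r q c).getD k false = false := by
  rw [flipStr, getD_append_left _ _ _ (by simpa), getD_replicate]

theorem flipStr_length {T r q} (hw : LTwit T r q) (c : Bool) :
    (flipStr r q c).length = r.length + (q 0 false).length := by
  cases c <;> simp [flipStr, sxor_length (q_length hw 0 true)]

theorem flipStr_drop (r : Str) (q : ℕ → Bool → Str) (c : Bool) :
    (flipStr r q c).drop r.length =
      (cond c (sxor (q 0 true) (q 0 false)) (List.replicate (q 0 false).length false)) := by
  simp [flipStr]

theorem act_flip_block {T r q} (hw : LTwit T r q) (c : Bool) (i : Bool) :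
    act ((flipStr r q c).drop r.length) (q 0 i) = q 0 (Bool.xor c i) := by
  rw [flipStr_drop]
  cases c
  · rw [Bool.cond_false, act_eq_self _ _ (fun k _ => getD_replicate _ _)]
    simp
  · rw [Bool.cond_true]
    cases i
    · rw [act_sxor_right (q_length hw 0 true)]
      simp
    · rw [act_sxor_left (q_length hw 0 true)]
      simp

theorem flip_mem {T r q} (hw : LTwit T r q) (c : Bool) {x : Str} (hx : x ∈ T) :
    act (flipStr r q c) x ∈ T := by
  rw [mem_wit hw] at hx ⊢
  obtain ⟨N, f, hp⟩ := hx
  refine ⟨N, fun k => if k = 0 then Bool.xor c (f 0) else f k, ?_⟩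
  have key : act (flipStr r q c)
      (r ++ ((List.range (N+1)).map (fun k => q k (f k))).flatten) =
      r ++ ((List.range (N+1)).map
        (fun k => q k (if k = 0 then Bool.xor c (f 0) else f k))).flatten := by
    rw [flatten_range_succ, flatten_range_succ, ← List.append_assoc, ← List.append_assoc]
    have hrest : ((List.range N).map ((fun k => q k (f k)) ∘ Nat.succ)).flatten =
        ((List.range N).map ((fun k => q k (if k = 0 then Bool.xor c (f 0) else f k)) ∘
          Nat.succ)).flatten := by
      refine congrArg List.flatten (List.map_congr_left ?_)
      intro k _
      simp [Nat.succ_ne_zero]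
    rw [act_append, act_append]
    rw [act_eq_self _ r (fun k hk => flipStr_getD_lt r q c hk)]
    rw [act_flip_block hw c (f 0)]
    have hdroplen : ((flipStr r q c).drop (r.length + (q 0 (f 0)).length)) = [] := by
      apply List.drop_eq_nil_of_le
      rw [flipStr_length hw, q_length hw 0 (f 0)]
    rw [List.length_append, hdroplen,
      act_eq_self _ _ (fun k _ => by simp [List.getD]),
      hrest]
    simp
  rw [← key]
  exact act_prefix _ hp

theorem actT_flip {T r q} (hw : LTwit T r q) (c : Bool) : actT (flipStr r q c) T = T := by
  apply Set.Subset.antisymm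
  · rintro x ⟨y, hy, rfl⟩
    exact flip_mem hw c hy
  · intro x hx
    exact ⟨act (flipStr r q c) x, flip_mem hw c hx, act_act_self _ x⟩
theorem getD_append_right (u v : Str) (k : ℕ) :
    (u ++ v).getD (u.length + k) false = v.getD k false := by
  rw [← getD_drop, List.drop_left]

theorem step_lemma (P : Set Tr) (hP : IsLTF P) (T T' : Tr) (h : CondPair P (T, T'))
    (a b : Bool) : CondPair P (split1 T a, split1 T' b) := by
  have h' : T ∈ P ∧ T' ∈ P ∧ ∃ s : Str, actT s T = T' := h
  obtain ⟨hT, hT', s₀, hs₀⟩ := h'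
  obtain ⟨r, q, hw⟩ := hP.1 T hT
  obtain ⟨r₂, q₂, hw₂⟩ := hP.1 T' hT'
  have hstem : stem T = r := stem_eq hw
  have hstem₂ : stem T' = r₂ := stem_eq hw₂
  have hr₂ : r₂ = act s₀ r := by
    have hspec : stemSpec (actT s₀ T) (act s₀ r) := stemSpec_act s₀ (stemSpec_of_wit hw)
    rw [hs₀] at hspec
    exact (stemSpec_unique hw₂ hspec).symm
  have h1 : split1 T a ∈ P := by
    rw [split1, hstem]
    exact hP.2.1 T hT (r ++ [a]) (stem_cons_mem hw a)
  have h2 : split1 T' b ∈ P := by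
    rw [split1, hstem₂]
    exact hP.2.1 T' hT' (r₂ ++ [b]) (stem_cons_mem hw₂ b)
  set c : Bool := Bool.xor (s₀.getD r.length false) (Bool.xor a b) with hc
  set τ : Str := flipStr r q c with hτ
  set σ : Str := sxor s₀ τ with hσ
  refine ⟨h1, h2, σ, ?_⟩
  have hσT : actT σ T = T' := by
    rw [hσ, ← actT_actT, actT_flip hw c, hs₀]
  have hτ_at : τ.getD r.length false = c := by
    rw [hτ, flipStr]
    have e := getD_append_right (List.replicate r.length false)
      (cond c (sxor (q 0 true) (q 0 false)) (List.replicate (q 0 false).length false)) 0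
    simp only [List.length_replicate, Nat.add_zero] at e
    rw [e]
    cases c
    · rw [Bool.cond_false, getD_replicate]
    · rw [Bool.cond_true, sxor_getD, q_getD0 hw, q_getD0 hw]
      rfl
  have hσ_at : σ.getD r.length false = Bool.xor a b := by
    rw [hσ, sxor_getD, hτ_at, hc]
    cases s₀.getD r.length false <;> cases a <;> cases b <;> rfl
  have hact : act σ (r ++ [a]) = r₂ ++ [b] := by
    rw [act_append, act_singleton, getD_drop, Nat.add_zero, hσ_at]
    have e1 : act σ r = act s₀ r := act_congr r (fun k hk => by
      rw [hσ, sxor_getD, hτ, flipStr_getD_lt r q c hk, Bool.xor_false])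
    rw [e1, ← hr₂]
    congr 1
    cases a <;> cases b <;> rfl
  show actT σ (split1 T a) = split1 T' b
  rw [split1, split1, hstem, hstem₂, actT_restr, hσT, hact]

theorem stmt17_aux (P : Set Tr) (hP : IsLTF P) :
    ∀ s t : Str, s.length = t.length → ∀ T T' : Tr, CondPair P (T, T') →
      CondPair P (splitS T s, splitS T' t) := by
  intro s
  induction s with
  | nil =>
    intro t ht T T' h
    have : t = [] := List.eq_nil_of_length_eq_zero ht.symm
    subst this
    exact h
  | cons a s' ih =>
    intro t ht T T' h
    cases t with
    | nil => simp at ht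
    | cons b t' =>
      exact ih t' (by simpa using ht) (split1 T a) (split1 T' b) (step_lemma P hP T T' h a b)

/-- Lemma `dr`: if `P` is a large-tree forcing notion,
`⟨T,T'⟩ ∈ P ×_{E0} P`, and `s, t ∈ 2^n`, then `⟨T→s, T'→t⟩ ∈ P ×_{E0} P`. -/
theorem stmt17 (P : Set Tr) (hP : IsLTF P) (T T' : Tr) (hTT' : CondPair P (T, T'))
    (n : ℕ) (s t : Str) (hs : s.length = n) (ht : t.length = n) :
    CondPair P (splitS T s, splitS T' t) := by
  exact stmt17_aux P hP s t (by rw [hs, ht]) T T' hTT'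

end E0L
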